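/- Let (P_n) be monic orthogonal with respect to a regular functional u with ⟨u,1⟩=1, and define monic polynomials Q_n := P_n + Σ_{i=1}^N r_{i,n} P_{n-i} (case M = 0), where r_{i,n} = 0 for i > n and r_{N,N} ≠ 0. If (Q_n) is also a monic orthogonal polynomial sequence with respect to a regular functional v with ⟨v,1⟩=1, then there exists a unique polynomial Ψ_N of exact degree N such that u = Ψ_N v; moreover Ψ_N = r_{N,N} Q_N/⟨v,Q_N²⟩ + Σ_{i=0}^{N-1} λ_i Q_i/⟨v,Q_i²⟩ for some scalars λ_i. -/

import Mathlib

open Polynomial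

/-- Every polynomial of degree `< n` is a linear combination of `Q 0, ..., Q (n-1)`
when the `Q i` are monic of degree `i`. -/
lemma span_of_monic_degree (Q : ℕ → Polynomial ℂ) (hm : ∀ n, (Q n).Monic)
    (hd : ∀ n, (Q n).degree = n) :
    ∀ (n : ℕ) (p : Polynomial ℂ), p.degree < n →
      ∃ c : ℕ → ℂ, p = ∑ i ∈ Finset.range n, c i • Q i := by
  intro n
  induction n with
  | zero =>
    intro p hp
    refine ⟨fun _ => 0, ?_⟩
    simp only [Finset.range_zero, Finset.sum_empty]
    rw [← degree_eq_bot]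
    exact Nat.WithBot.lt_zero_iff.mp (by exact_mod_cast hp)
  | succ n ih =>
    intro p hp
    have hQn : (Q n).natDegree = n := natDegree_eq_of_degree_eq_some (hd n)
    have hQc : (Q n).coeff n = 1 := by
      have := (hm n).coeff_natDegree
      rwa [hQn] at this
    set q : Polynomial ℂ := p - p.coeff n • Q n with hq
    have hqdeg : q.degree < n := by
      rw [degree_lt_iff_coeff_zero]
      intro m hm'
      have hm'' : n ≤ m := by exact_mod_cast hm'
      rcases eq_or_lt_of_le hm'' with h | h
      · simp [hq, ← h, hQc]
      · have h1 : p.coeff m = 0 := by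
          apply coeff_eq_zero_of_degree_lt
          exact lt_of_lt_of_le hp (by exact_mod_cast h)
        have h2 : (Q n).coeff m = 0 := by
          apply coeff_eq_zero_of_degree_lt
          rw [hd n]; exact_mod_cast h
        simp [hq, h1, h2]
    obtain ⟨c, hc⟩ := ih q hqdeg
    refine ⟨fun i => if i = n then p.coeff n else c i, ?_⟩
    rw [Finset.sum_range_succ]
    show p = (∑ i ∈ Finset.range n, (if i = n then p.coeff n else c i) • Q i)
        + (if n = n then p.coeff n else c n) • Q n
    rw [if_pos rfl]
    have : ∑ i ∈ Finset.range n, (if i = n then p.coeff n else c i) • Q i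
        = ∑ i ∈ Finset.range n, c i • Q i := by
      apply Finset.sum_congr rfl
      intro i hi
      rw [if_neg (Finset.mem_range.mp hi).ne]
    rw [this, ← hc, hq]
    abel

/-- Theorem 2.4 (a) (case M = 0): there is a unique polynomial `Ψ_N` of exact degree
`N` with `u = Ψ_N v`, and it has the stated expansion in the `Q̄_i`. -/
theorem case_M_zero_existence_uniqueness
    (N : ℕ) (hN : 1 ≤ N)
    (u v : Polynomial ℂ →ₗ[ℂ] ℂ)
    (P Q : ℕ → Polynomial ℂ) (r : ℕ → ℕ → ℂ)
    (hPmonic : ∀ n, (P n).Monic) (hPdeg : ∀ n, (P n).degree = n)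
    (hPorth : ∀ m n, m ≠ n → u (P m * P n) = 0) (hPreg : ∀ n, u (P n ^ 2) ≠ 0)
    (hQorth : ∀ m n, m ≠ n → v (Q m * Q n) = 0) (hQreg : ∀ n, v (Q n ^ 2) ≠ 0)
    (hQmonic : ∀ n, (Q n).Monic) (hQdeg : ∀ n, (Q n).degree = n)
    (hu1 : u 1 = 1) (hv1 : v 1 = 1)
    (hrz : ∀ i n, n < i → r i n = 0) (hrNN : r N N ≠ 0)
    (hQdef : ∀ n, Q n = P n + ∑ i ∈ Finset.Icc 1 N, r i n • P (n - i)) :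
    ∃ Ψ : Polynomial ℂ, Ψ.degree = (N : ℕ) ∧ (∀ p, u p = v (Ψ * p)) ∧
      (∃ lam : ℕ → ℂ, Ψ = r N N • ((v (Q N ^ 2))⁻¹ • Q N)
          + ∑ i ∈ Finset.range N, lam i • ((v (Q i ^ 2))⁻¹ • Q i)) ∧
      (∀ Ψ' : Polynomial ℂ, (∀ p, u p = v (Ψ' * p)) → Ψ' = Ψ) := by
  -- `P 0 = 1`
  have hP0 : P 0 = 1 := (hPmonic 0).degree_le_zero_iff_eq_one.mp (hPdeg 0).le
  -- `u (P k) = 0` for `k ≠ 0`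
  have hPz : ∀ k, k ≠ 0 → u (P k) = 0 := by
    intro k hk
    have := hPorth k 0 hk
    rwa [hP0, mul_one] at this
  -- `u (Q N) = r N N`
  have huQN : u (Q N) = r N N := by
    rw [hQdef N, map_add, map_sum]
    have h1 : u (P N) = 0 := hPz N (by omega)
    rw [h1, zero_add]
    rw [Finset.sum_eq_single N]
    · simp [hP0, hu1]
    · intro i hi hiN
      have hi' := Finset.mem_Icc.mp hi
      have : N - i ≠ 0 := by omega
      simp [hPz _ this]
    · intro h
      exact absurd (Finset.mem_Icc.mpr ⟨hN, le_refl N⟩) h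
  -- `u (Q j) = 0` for `j > N`
  have huQgt : ∀ j, N < j → u (Q j) = 0 := by
    intro j hj
    rw [hQdef j, map_add, map_sum]
    have h1 : u (P j) = 0 := hPz j (by omega)
    rw [h1, zero_add]
    apply Finset.sum_eq_zero
    intro i hi
    have hi' := Finset.mem_Icc.mp hi
    have : j - i ≠ 0 := by omega
    simp [hPz _ this]
  -- the candidate
  set Ψ : Polynomial ℂ :=
    ∑ i ∈ Finset.range (N + 1), u (Q i) • ((v (Q i ^ 2))⁻¹ • Q i) with hΨ
  -- `v (Ψ * Q j) = u (Q j)` for all `j`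
  have hvq : ∀ j, v (Ψ * Q j) = u (Q j) := by
    intro j
    have hexp : Ψ * Q j
        = ∑ i ∈ Finset.range (N + 1), u (Q i) • ((v (Q i ^ 2))⁻¹ • (Q i * Q j)) := by
      rw [hΨ, Finset.sum_mul]
      apply Finset.sum_congr rfl
      intro i _
      rw [smul_mul_assoc, smul_mul_assoc]
    rw [hexp, map_sum]
    by_cases hj : j ≤ N
    · rw [Finset.sum_eq_single j]
      · rw [map_smul, map_smul, ← sq, smul_eq_mul, smul_eq_mul,
          inv_mul_cancel₀ (hQreg j), mul_one]
      · intro i _ hij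
        rw [map_smul, map_smul, hQorth i j hij]
        simp
      · intro h
        exact absurd (Finset.mem_range.mpr (by omega)) h
    · push_neg at hj
      rw [huQgt j hj]
      apply Finset.sum_eq_zero
      intro i hi
      have : i ≠ j := by
        have := Finset.mem_range.mp hi; omega
      rw [map_smul, map_smul, hQorth i j this]
      simp
  -- the main functional equation
  have hmain : ∀ p, u p = v (Ψ * p) := by
    intro p
    have hp : p.degree < (p.natDegree + 1 : ℕ) := by
      exact lt_of_le_of_lt degree_le_natDegree (by exact_mod_cast Nat.lt_succ_self _)
    obtain ⟨c, hc⟩ := span_of_monic_degree Q hQmonic hQdeg (p.natDegree + 1) p hp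
    rw [hc, Finset.mul_sum, map_sum, map_sum]
    apply Finset.sum_congr rfl
    intro i _
    rw [map_smul, mul_smul_comm, map_smul, hvq]
  -- degree of Ψ
  have hlead : u (Q N) • ((v (Q N ^ 2))⁻¹ • Q N) = C (r N N * (v (Q N ^ 2))⁻¹) * Q N := by
    rw [huQN, smul_smul, smul_eq_C_mul]
  have hdegN : (u (Q N) • ((v (Q N ^ 2))⁻¹ • Q N)).degree = (N : ℕ) := by
    rw [hlead, degree_C_mul (mul_ne_zero hrNN (inv_ne_zero (hQreg N))), hQdeg]
  have hdeglt : (∑ i ∈ Finset.range N, u (Q i) • ((v (Q i ^ 2))⁻¹ • Q i)).degree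
      < (N : ℕ) := by
    apply lt_of_le_of_lt (degree_sum_le _ _)
    rw [Finset.sup_lt_iff (by exact_mod_cast WithBot.bot_lt_coe N)]
    intro i hi
    apply lt_of_le_of_lt (degree_smul_le _ _)
    apply lt_of_le_of_lt (degree_smul_le _ _)
    rw [hQdeg]
    exact_mod_cast Finset.mem_range.mp hi
  have hΨsplit : Ψ = (∑ i ∈ Finset.range N, u (Q i) • ((v (Q i ^ 2))⁻¹ • Q i))
      + u (Q N) • ((v (Q N ^ 2))⁻¹ • Q N) := by
    rw [hΨ, Finset.sum_range_succ]
  have hdegΨ : Ψ.degree = (N : ℕ) := by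
    rw [hΨsplit, degree_add_eq_right_of_degree_lt (by rw [hdegN]; exact hdeglt), hdegN]
  refine ⟨Ψ, hdegΨ, hmain, ⟨fun i => u (Q i), ?_⟩, ?_⟩
  · rw [hΨsplit, huQN, add_comm]
  · -- uniqueness
    intro Ψ' hΨ'
    have hD : ∀ p, v ((Ψ' - Ψ) * p) = 0 := by
      intro p
      rw [sub_mul, map_sub, ← hΨ' p, ← hmain p, sub_self]
    set D := Ψ' - Ψ with hDdef
    have hDd : D.degree < (D.natDegree + 1 : ℕ) :=
      lt_of_le_of_lt degree_le_natDegree (by exact_mod_cast Nat.lt_succ_self _)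
    obtain ⟨c, hc⟩ := span_of_monic_degree Q hQmonic hQdeg (D.natDegree + 1) D hDd
    have hcz : ∀ j ∈ Finset.range (D.natDegree + 1), c j • Q j = 0 := by
      intro j hj
      have h0 : v (D * Q j) = 0 := hD (Q j)
      rw [hc, Finset.sum_mul, map_sum, Finset.sum_eq_single j] at h0
      · rw [smul_mul_assoc, map_smul, ← sq, smul_eq_mul] at h0
        rcases mul_eq_zero.mp h0 with h | h
        · rw [h, zero_smul]
        · exact absurd h (hQreg j)
      · intro i _ hij
        rw [smul_mul_assoc, map_smul, hQorth i j hij, smul_zero]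
      · intro h
        exact absurd hj h
    have hD0 : D = 0 := by
      rw [hc]
      exact Finset.sum_eq_zero hcz
    have := sub_eq_zero.mp hD0
    exact this
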